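/- Let A be a Banach algebra (a complete normed ring) over ℝ or ℂ, with exponential defined by the power series exp(a) = ∑_{k≥0} a^k / k!. Then for all a, b ∈ A, b·exp(a) − exp(a)·b = ∫₀¹ exp(s a) · (b a − a b) · exp((1−s) a) ds, where the integral is the Bochner integral of the continuous A-valued function s ↦ exp(s a)(ba − ab)exp((1−s)a) over [0,1]. -/

import Mathlib

open intervalIntegral

/-- Duhamel-type commutator formula in a Banach algebra:
`b·exp(a) − exp(a)·b = ∫₀¹ exp(s a)(ba − ab)exp((1−s)a) ds`. -/
theorem stmt_8 {𝕜 : Type*} [RCLike 𝕜] {A : Type*} [NormedRing A] [NormedAlgebra 𝕜 A]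
    [CompleteSpace A] [NormedSpace ℝ A] [IsScalarTower ℝ 𝕜 A] (a b : A) :
    b * NormedSpace.exp a - NormedSpace.exp a * b =
      ∫ s in (0:ℝ)..1,
        NormedSpace.exp (s • a) * (b * a - a * b) *
          NormedSpace.exp ((1 - s) • a) := by
  letI : Algebra ℝ A :=
    { toSMul := (inferInstance : SMul ℝ A)
      algebraMap := (algebraMap 𝕜 A).comp (algebraMap ℝ 𝕜)
      commutes' := fun r x => by
        simpa using Algebra.commutes (algebraMap ℝ 𝕜 r) x
      smul_def' := fun r x => by
        simp only [RingHom.coe_comp, Function.comp_apply]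
        rw [← algebraMap_smul 𝕜 r x, Algebra.smul_def] }
  letI : NormedAlgebra ℝ A := { norm_smul_le := fun r x => norm_smul_le r x }
  set f : ℝ → A := fun s => NormedSpace.exp (s • a) * b * NormedSpace.exp ((1 - s) • a)
    with hf
  set g : ℝ → A := fun s =>
    NormedSpace.exp (s • a) * (b * a - a * b) * NormedSpace.exp ((1 - s) • a) with hg
  have hderiv : ∀ s ∈ Set.uIcc (0:ℝ) 1, HasDerivAt f (-g s) s := by
    intro s _
    have h1 : HasDerivAt (fun s : ℝ => NormedSpace.exp (s • a))
        (NormedSpace.exp (s • a) * a) s := hasDerivAt_exp_smul_const a s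
    have h2 : HasDerivAt (fun s : ℝ => NormedSpace.exp ((1 - s) • a))
        (-(NormedSpace.exp ((1 - s) • a) * a)) s := by
      have hin : HasDerivAt (fun s : ℝ => 1 - s) (-1 : ℝ) s := by
        simpa using (hasDerivAt_id s).const_sub (1:ℝ)
      have := HasDerivAt.scomp (𝕜' := ℝ) s (hasDerivAt_exp_smul_const (𝔸 := A) a (1 - s)) hin
      simpa [Function.comp_def, neg_smul] using this
    have hcomm : Commute a (NormedSpace.exp ((1 - s) • a)) :=
      (((Commute.refl a).smul_right (1 - s)).exp_right)
    have hd := (h1.mul_const b).mul h2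
    convert hd using 1
    · rfl
    simp only [hg]
    rw [mul_neg, ← hcomm.eq]
    noncomm_ring
  have hcont : Continuous g := by
    have h1 : Continuous fun s : ℝ => NormedSpace.exp (s • a) :=
      continuous_iff_continuousAt.2 fun s => (hasDerivAt_exp_smul_const (𝕂 := ℝ) a s).continuousAt
    have h2 : Continuous fun s : ℝ => NormedSpace.exp ((1 - s) • a) :=
      (continuous_iff_continuousAt.2 fun s => (hasDerivAt_exp_smul_const (𝕂 := ℝ) a s).continuousAt).comp
        (continuous_const.sub continuous_id)
    exact (h1.mul continuous_const).mul h2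
  have key : (∫ s in (0:ℝ)..1, -g s) = f 1 - f 0 :=
    intervalIntegral.integral_eq_sub_of_hasDerivAt hderiv
      (hcont.neg.intervalIntegrable 0 1)
  rw [intervalIntegral.integral_neg] at key
  have h01 : (∫ s in (0:ℝ)..1, g s) = f 0 - f 1 := by
    have := neg_eq_iff_eq_neg.mp key
    rw [this]; abel
  rw [h01, hf]
  simp [NormedSpace.exp_zero]
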